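/- Let H = Σ_{γ∈Γ} h_γ P_γ and H' = Σ_{γ∈Γ} h'_γ P_γ be n-qubit Hamiltonians with real coefficients and distinct non-identity Pauli strings P_γ. Fix a qubit i and suppose ‖[A, H−H']‖_τ ≤ ε for every A ∈ {X_i, Y_i, Z_i}, where ‖B‖_τ² = 2^{-n} Tr(B B†). Then |h_γ − h'_γ| ≤ ε for every γ such that P_γ acts nontrivially on qubit i. -/

import Mathlib

open Matrix

/-- The single-qubit Pauli matrices `I, X, Y, Z`. -/
noncomputable def pauli : Fin 4 → Matrix (Fin 2) (Fin 2) ℂ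
  | 0 => 1
  | 1 => !![0, 1; 1, 0]
  | 2 => !![0, -Complex.I; Complex.I, 0]
  | 3 => !![1, 0; 0, -1]

/-- The Pauli string `⊗_v σ_{s(v)}` on the qubits indexed by `V`. -/
noncomputable def pauliString {V : Type*} [Fintype V] (s : V → Fin 4) :
    Matrix (V → Fin 2) (V → Fin 2) ℂ :=
  Matrix.of fun x y => ∏ v, pauli (s v) (x v) (y v)

/-- The normalized trace norm `‖B‖_τ = √(2^{-n} Tr(B Bᴴ))` w.r.t. the maximally mixed state. -/
noncomputable def tauNorm {V : Type*} [Fintype V] [DecidableEq V]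
    (B : Matrix (V → Fin 2) (V → Fin 2) ℂ) : ℝ :=
  Real.sqrt (((B * Bᴴ).trace.re) / 2 ^ Fintype.card V)

/-! ### Single-qubit lemmas -/

lemma pauli_mul_self (a : Fin 4) : pauli a * pauli a = 1 := by
  fin_cases a <;> simp [pauli] <;>
    · ext x y; fin_cases x <;> fin_cases y <;>
      simp [Matrix.mul_apply, Fin.sum_univ_two, Matrix.one_apply, Complex.ext_iff]

lemma pauli_conjT (a : Fin 4) : (pauli a)ᴴ = pauli a := by
  fin_cases a <;>
    · ext x y; fin_cases x <;> fin_cases y <;>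
      simp [pauli, Matrix.conjTranspose_apply, Matrix.one_apply, Complex.ext_iff]

lemma pauli_trace_mul (b c : Fin 4) : (pauli b * pauli c).trace = if b = c then 2 else 0 := by
  fin_cases b <;> fin_cases c <;>
    · simp [pauli, Matrix.trace, Matrix.diag, Matrix.mul_apply, Fin.sum_univ_two,
        Matrix.one_apply, Complex.ext_iff] <;> norm_num

lemma pauli_conj_neg (a c : Fin 4) (ha : a ≠ 0) (hc : c ≠ 0) (hac : a ≠ c) :
    pauli a * pauli c * pauli a = -pauli c := by
  fin_cases a <;> fin_cases c <;> first
    | (simp_all; done)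
    | (ext x y; fin_cases x <;> fin_cases y <;>
        simp [pauli, Matrix.mul_apply, Fin.sum_univ_two, Matrix.neg_apply])

lemma pauli_conj_pm (a c : Fin 4) :
    pauli a * pauli c * pauli a = pauli c ∨ pauli a * pauli c * pauli a = -pauli c := by
  by_cases ha : a = 0
  · left; simp [ha, pauli]
  by_cases hc : c = 0
  · left; subst hc
    show pauli a * 1 * pauli a = 1
    rw [mul_one, pauli_mul_self]
  by_cases hac : a = c
  · left; subst hac
    rw [mul_assoc, pauli_mul_self, mul_one]
  · right; exact pauli_conj_neg a c ha hc hac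

/-- `Tr(σ_a σ_b (σ_c σ_a)) = 2 δ_{bc}`. -/
lemma pauli_tr4_1 (a b c : Fin 4) :
    (pauli a * pauli b * (pauli c * pauli a)).trace = if b = c then 2 else 0 := by
  rw [← mul_assoc, Matrix.trace_mul_comm, ← mul_assoc, ← mul_assoc, pauli_mul_self, one_mul,
    pauli_trace_mul]

/-- `Tr(σ_b σ_a (σ_c σ_a)) = 0` when `b ≠ c`. -/
lemma pauli_tr4_2 (a b c : Fin 4) (hbc : b ≠ c) :
    (pauli b * pauli a * (pauli c * pauli a)).trace = 0 := by
  have : pauli b * pauli a * (pauli c * pauli a) = pauli b * (pauli a * pauli c * pauli a) := by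
    noncomm_ring
  rw [this]
  rcases pauli_conj_pm a c with hpm | hpm <;> rw [hpm] <;>
    simp [pauli_trace_mul, hbc]

/-- `Tr(σ_b σ_a (σ_b σ_a)) = -2` when `σ_a, σ_b` anticommute. -/
lemma pauli_tr4_3 (a b : Fin 4) (ha : a ≠ 0) (hb : b ≠ 0) (hab : a ≠ b) :
    (pauli b * pauli a * (pauli b * pauli a)).trace = -2 := by
  have : pauli b * pauli a * (pauli b * pauli a) = pauli b * (pauli a * pauli b * pauli a) := by
    noncomm_ring
  rw [this, pauli_conj_neg a b ha hb hab]
  simp [pauli_trace_mul]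

/-! ### Tensor products -/

variable {V : Type} [Fintype V] [DecidableEq V]

noncomputable def kron (M : V → Matrix (Fin 2) (Fin 2) ℂ) :
    Matrix (V → Fin 2) (V → Fin 2) ℂ :=
  Matrix.of fun x y => ∏ v, M v (x v) (y v)

lemma kron_mul (M N : V → Matrix (Fin 2) (Fin 2) ℂ) :
    kron M * kron N = kron (fun v => M v * N v) := by
  ext x y
  simp only [kron, Matrix.mul_apply, Matrix.of_apply]
  rw [Finset.prod_univ_sum, Fintype.piFinset_univ]
  exact Finset.sum_congr rfl fun z _ => (Finset.prod_mul_distrib).symm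

lemma kron_trace (M : V → Matrix (Fin 2) (Fin 2) ℂ) :
    (kron M).trace = ∏ v, (M v).trace := by
  simp only [Matrix.trace, Matrix.diag, kron, Matrix.of_apply]
  rw [Finset.prod_univ_sum, Fintype.piFinset_univ]

lemma kron_one : kron (fun _ : V => (1 : Matrix (Fin 2) (Fin 2) ℂ)) = 1 := by
  ext x y
  simp only [kron, Matrix.of_apply, Matrix.one_apply]
  rw [Fintype.prod_boole]
  simp [funext_iff]

lemma pauliString_eq_kron (s : V → Fin 4) :
    pauliString s = kron (fun v => pauli (s v)) := rfl

lemma pauliString_conjT (s : V → Fin 4) : (pauliString s)ᴴ = pauliString s := by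
  ext x y
  simp only [pauliString, Matrix.conjTranspose_apply, Matrix.of_apply]
  rw [show (star (∏ v : V, pauli (s v) (y v) (x v))) =
      (starRingEnd ℂ) (∏ v : V, pauli (s v) (y v) (x v)) from rfl, map_prod (starRingEnd ℂ)]
  refine Finset.prod_congr rfl fun v _ => ?_
  have := congrFun (congrFun (pauli_conjT (s v)) (x v)) (y v)
  simpa [Matrix.conjTranspose_apply] using this

/-- trace of a product of four Pauli strings factorizes. -/
lemma pauliString_trace4 (s t u w : V → Fin 4) :
    (pauliString s * pauliString t * (pauliString u * pauliString w)).trace =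
      ∏ v, (pauli (s v) * pauli (t v) * (pauli (u v) * pauli (w v))).trace := by
  simp only [pauliString_eq_kron, kron_mul, kron_trace]

lemma pauliString_mul_self (s : V → Fin 4) : pauliString s * pauliString s = 1 := by
  rw [pauliString_eq_kron, kron_mul]
  simp only [pauli_mul_self]
  exact kron_one

/-! ### Cauchy–Schwarz for the trace inner product -/

lemma trace_sq_expand (B : Matrix (V → Fin 2) (V → Fin 2) ℂ) :
    (B * Bᴴ).trace = ((∑ x, ∑ y, ‖B x y‖^2 : ℝ) : ℂ) := by
  simp only [Matrix.trace, Matrix.diag, Matrix.mul_apply, Matrix.conjTranspose_apply]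
  push_cast
  refine Finset.sum_congr rfl fun x _ => Finset.sum_congr rfl fun y _ => ?_
  rw [show (star (B x y)) = (starRingEnd ℂ) (B x y) from rfl, Complex.mul_conj,
    ← Complex.sq_norm]
  push_cast
  ring

lemma trace_cs (B Q : Matrix (V → Fin 2) (V → Fin 2) ℂ) :
    ‖(B * Qᴴ).trace‖ ≤
      Real.sqrt ((B * Bᴴ).trace.re) * Real.sqrt ((Q * Qᴴ).trace.re) := by
  have h1 : (B * Qᴴ).trace = ∑ p : (V → Fin 2) × (V → Fin 2), B p.1 p.2 * (starRingEnd ℂ) (Q p.1 p.2) := by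
    simp only [Matrix.trace, Matrix.diag, Matrix.mul_apply, Matrix.conjTranspose_apply]
    rw [← Finset.sum_product']
    rfl
  have h2 : ‖(B * Qᴴ).trace‖ ≤
      ∑ p : (V → Fin 2) × (V → Fin 2), ‖B p.1 p.2‖ * ‖Q p.1 p.2‖ := by
    rw [h1]
    refine (norm_sum_le _ _).trans_eq ?_
    refine Finset.sum_congr rfl fun p _ => ?_
    rw [norm_mul, Complex.norm_conj]
  have h3 := Real.sum_mul_le_sqrt_mul_sqrt Finset.univ
    (fun p : (V → Fin 2) × (V → Fin 2) => ‖B p.1 p.2‖)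
    (fun p => ‖Q p.1 p.2‖)
  have hB : ((B * Bᴴ).trace).re = ∑ p : (V → Fin 2) × (V → Fin 2), ‖B p.1 p.2‖^2 := by
    rw [trace_sq_expand, Complex.ofReal_re, ← Finset.sum_product']
    rfl
  have hQ : ((Q * Qᴴ).trace).re = ∑ p : (V → Fin 2) × (V → Fin 2), ‖Q p.1 p.2‖^2 := by
    rw [trace_sq_expand, Complex.ofReal_re, ← Finset.sum_product']
    rfl
  rw [hB, hQ]
  exact h2.trans h3

set_option maxHeartbeats 1000000 in
/-- **Locally good coefficients:** if `H = Σ_γ h_γ P_γ` and `H' = Σ_γ h'_γ P_γ` for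
distinct non-identity Pauli strings `P_γ`, and `‖[A, H−H']‖_τ ≤ ε` for each of the
single-qubit Paulis `A ∈ {X_i, Y_i, Z_i}` on a given qubit `i`, then `|h_γ − h'_γ| ≤ ε`
for each `γ` whose Pauli string acts (nontrivially) on qubit `i`. -/
theorem locally_good_coefficients
    {V Γ : Type} [Fintype V] [DecidableEq V] [Fintype Γ]
    (P : Γ → V → Fin 4) (hinj : Function.Injective P)
    (hnontriv : ∀ γ, P γ ≠ fun _ => 0)
    (h h' : Γ → ℝ) (i : V) (ε : ℝ)
    (H H' : Matrix (V → Fin 2) (V → Fin 2) ℂ)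
    (hH : H = ∑ γ, (h γ : ℂ) • pauliString (P γ))
    (hH' : H' = ∑ γ, (h' γ : ℂ) • pauliString (P γ))
    (hcomm : ∀ a : Fin 4, a ≠ 0 →
      tauNorm (pauliString (Function.update (fun _ => (0 : Fin 4)) i a) * (H - H') -
        (H - H') * pauliString (Function.update (fun _ => (0 : Fin 4)) i a)) ≤ ε) :
    ∀ γ, P γ i ≠ 0 → |h γ - h' γ| ≤ ε := by
  classical
  intro γ₀ hPγ₀
  set n := Fintype.card V with hn
  set a : Fin 4 := if P γ₀ i = 1 then 2 else 1 with hadef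
  have ha0 : a ≠ 0 := by
    by_cases h1 : P γ₀ i = 1 <;> simp [hadef, h1]
  have hab : a ≠ P γ₀ i := by
    by_cases h1 : P γ₀ i = 1 <;> simp [hadef, h1]
    exact fun hh => h1 hh.symm
  set α := Function.update (fun _ : V => (0 : Fin 4)) i a with hα
  have hαi : α i = a := by rw [hα]; simp
  have hαv : ∀ v, v ≠ i → α v = 0 := by
    intro v hv; rw [hα]; exact Function.update_of_ne hv _ _
  set A := pauliString α with hA
  set c : Γ → ℝ := fun γ => h γ - h' γ with hc
  have hD : H - H' = ∑ γ, (c γ : ℂ) • pauliString (P γ) := by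
    rw [hH, hH', ← Finset.sum_sub_distrib]
    refine Finset.sum_congr rfl fun γ _ => ?_
    rw [← sub_smul]
    norm_cast
  -- the two families of traces
  have hF : ∀ γ, (A * pauliString (P γ) * (pauliString (P γ₀) * A)).trace
      = if γ = γ₀ then ((2 : ℂ)^n) else 0 := by
    intro γ
    rw [hA, pauliString_trace4]
    have heach : ∀ v : V, (pauli (α v) * pauli (P γ v) * (pauli (P γ₀ v) * pauli (α v))).trace
        = if P γ v = P γ₀ v then 2 else 0 := fun v => pauli_tr4_1 _ _ _
    rw [Finset.prod_congr rfl fun v _ => heach v]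
    by_cases hγ : γ = γ₀
    · subst hγ
      simp [Finset.prod_const, hn]
    · rw [if_neg hγ]
      have : ∃ v, P γ v ≠ P γ₀ v := by
        by_contra hcon
        push_neg at hcon
        exact hγ (hinj (funext hcon))
      obtain ⟨v, hv⟩ := this
      exact Finset.prod_eq_zero (Finset.mem_univ v) (by simp [hv])
  have hG : ∀ γ, (pauliString (P γ) * A * (pauliString (P γ₀) * A)).trace
      = if γ = γ₀ then -((2 : ℂ)^n) else 0 := by
    intro γ
    rw [hA, pauliString_trace4]
    by_cases hγ : γ = γ₀
    · subst hγ
      rw [if_pos rfl, ← Finset.mul_prod_erase Finset.univ _ (Finset.mem_univ i)]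
      have hfi : (pauli (P γ i) * pauli (α i) * (pauli (P γ i) * pauli (α i))).trace = -2 := by
        rw [hαi]; exact pauli_tr4_3 a (P γ i) ha0 hPγ₀ hab
      have hrest : ∀ v ∈ Finset.univ.erase i,
          (pauli (P γ v) * pauli (α v) * (pauli (P γ v) * pauli (α v))).trace = 2 := by
        intro v hv
        rw [hαv v (Finset.mem_erase.1 hv).1]
        simp only [show pauli 0 = (1 : Matrix (Fin 2) (Fin 2) ℂ) from rfl, mul_one]
        rw [pauli_trace_mul, if_pos rfl]
      rw [hfi, Finset.prod_congr rfl hrest, Finset.prod_const]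
      have hcard : (Finset.univ.erase i).card = n - 1 := by
        rw [Finset.card_erase_of_mem (Finset.mem_univ i), Finset.card_univ]
      have hpos : 1 ≤ n := Fintype.card_pos_iff.2 ⟨i⟩
      rw [hcard]
      have : (2 : ℂ)^n = 2 * 2^(n-1) := by
        rw [← pow_succ']
        congr 1
        omega
      rw [this]; ring
    · rw [if_neg hγ]
      by_cases hout : ∀ v, v ≠ i → P γ v = P γ₀ v
      · have hi : P γ i ≠ P γ₀ i := by
          intro hh
          apply hγ
          apply hinj
          funext v
          by_cases hv : v = i
          · subst hv; exact hh
          · exact hout v hv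
        refine Finset.prod_eq_zero (Finset.mem_univ i) ?_
        rw [hαi]
        exact pauli_tr4_2 a _ _ hi
      · push_neg at hout
        obtain ⟨v, hvi, hv⟩ := hout
        refine Finset.prod_eq_zero (Finset.mem_univ v) ?_
        rw [hαv v hvi]
        simp only [show pauli 0 = (1 : Matrix (Fin 2) (Fin 2) ℂ) from rfl, mul_one]
        rw [pauli_trace_mul, if_neg hv]
  -- total trace
  set B := A * (H - H') - (H - H') * A with hB
  have hT : (B * (pauliString (P γ₀) * A)).trace = (c γ₀ : ℂ) * 2^(n+1) := by
    have hBM : B * (pauliString (P γ₀) * A) =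
        ∑ γ, (c γ : ℂ) • (A * pauliString (P γ) * (pauliString (P γ₀) * A)
          - pauliString (P γ) * A * (pauliString (P γ₀) * A)) := by
      rw [hB, hD]
      simp only [Finset.mul_sum, Finset.sum_mul, mul_smul_comm, smul_mul_assoc, sub_mul,
        smul_sub, Finset.sum_sub_distrib]
    rw [hBM, Matrix.trace_sum]
    simp only [Matrix.trace_smul, Matrix.trace_sub, hF, hG, smul_eq_mul]
    rw [Finset.sum_eq_single γ₀]
    · rw [if_pos rfl, if_pos rfl, pow_succ]
      ring
    · intro γ _ hγ
      simp [hγ]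
    · intro hmem
      exact absurd (Finset.mem_univ γ₀) hmem
  -- Cauchy–Schwarz side
  have hQH : (A * pauliString (P γ₀))ᴴ = pauliString (P γ₀) * A := by
    rw [Matrix.conjTranspose_mul, hA, pauliString_conjT, pauliString_conjT]
  have hQQ : (A * pauliString (P γ₀)) * (A * pauliString (P γ₀))ᴴ = 1 := by
    rw [hQH]
    rw [show A * pauliString (P γ₀) * (pauliString (P γ₀) * A)
        = A * (pauliString (P γ₀) * pauliString (P γ₀)) * A by noncomm_ring]
    rw [pauliString_mul_self, mul_one, hA, pauliString_mul_self]
  have hcs := trace_cs B (A * pauliString (P γ₀))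
  rw [hQQ, hQH, hT] at hcs
  have h1re : ((1 : Matrix (V → Fin 2) (V → Fin 2) ℂ)).trace.re = (2:ℝ)^n := by
    rw [Matrix.trace_one]
    simp only [Fintype.card_fun, Fintype.card_fin, ← hn]
    rw [Complex.natCast_re]
    push_cast
    ring
  rw [h1re] at hcs
  have habs : ‖(c γ₀ : ℂ) * 2^(n+1)‖ = |c γ₀| * 2^(n+1) := by
    rw [norm_mul, Complex.norm_real, Real.norm_eq_abs, norm_pow, Complex.norm_two]
  rw [habs] at hcs
  have hτ : Real.sqrt ((B * Bᴴ).trace.re / 2^n) ≤ ε := by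
    have htmp : tauNorm B ≤ ε := by
      rw [hB, hA, hα]
      exact hcomm a ha0
    simp only [tauNorm] at htmp
    rwa [← hn] at htmp
  have hr0 : 0 ≤ (B * Bᴴ).trace.re := by
    rw [trace_sq_expand B, Complex.ofReal_re]
    exact Finset.sum_nonneg fun x _ => Finset.sum_nonneg fun y _ => sq_nonneg _
  have hε0 : 0 ≤ ε := le_trans (Real.sqrt_nonneg _) hτ
  have hp : (0:ℝ) < 2^n := by positivity
  have hsqrt : Real.sqrt ((B * Bᴴ).trace.re) ≤ ε * Real.sqrt (2^n) := by
    have heq : Real.sqrt ((B * Bᴴ).trace.re)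
        = Real.sqrt ((B * Bᴴ).trace.re / 2^n) * Real.sqrt ((2:ℝ)^n) := by
      rw [← Real.sqrt_mul (by positivity)]
      congr 1
      field_simp
    rw [heq]
    exact mul_le_mul_of_nonneg_right hτ (Real.sqrt_nonneg _)
  have hfinal : |c γ₀| * 2^(n+1) ≤ ε * 2^n := by
    calc |c γ₀| * 2^(n+1) ≤ Real.sqrt ((B*Bᴴ).trace.re) * Real.sqrt ((2:ℝ)^n) := hcs
    _ ≤ (ε * Real.sqrt ((2:ℝ)^n)) * Real.sqrt ((2:ℝ)^n) :=
        mul_le_mul_of_nonneg_right hsqrt (Real.sqrt_nonneg _)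
    _ = ε * 2^n := by rw [mul_assoc, Real.mul_self_sqrt hp.le]
  have hcγ : c γ₀ = h γ₀ - h' γ₀ := rfl
  rw [← hcγ]
  have hps : (2:ℝ)^(n+1) = 2 * 2^n := by rw [pow_succ]; ring
  nlinarith [abs_nonneg (c γ₀), hp, hfinal]
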